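/- For any points X_1, …, X_n in a real inner product space, the convex hull conv(X_1, …, X_n) is contained in the union over i = 1, …, n of the closed balls S_i with center X_i/2 and radius ‖X_i‖/2 (that is, the balls having the segment from the origin 0 to X_i as a diameter). -/

import Mathlib

open Metric

theorem convexHull_subset_iUnion_balls
    {V : Type*} [NormedAddCommGroup V] [InnerProductSpace ℝ V]
    (n : ℕ) (X : Fin n → V) :
    convexHull ℝ (Set.range X) ⊆
      ⋃ i : Fin n, closedBall ((1 / 2 : ℝ) • X i) (‖X i‖ / 2) := by
  intro y hy
  rw [convexHull_range_eq_exists_affineCombination] at hy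
  obtain ⟨t, w, hw0, hw1, hy⟩ := hy
  rw [Finset.affineCombination_eq_linear_combination _ _ _ hw1] at hy
  have hsum : ∑ i ∈ t, w i * (inner ℝ y (y - X i) : ℝ) = 0 := by
    have h : ∑ i ∈ t, w i * (inner ℝ y (y - X i) : ℝ)
        = (∑ i ∈ t, w i) * inner ℝ y y - inner ℝ y (∑ i ∈ t, w i • X i) := by
      rw [inner_sum, Finset.sum_mul, ← Finset.sum_sub_distrib]
      refine Finset.sum_congr rfl fun i _ => ?_
      rw [inner_sub_right, real_inner_smul_right]; ring
    rw [h, hw1, hy]; ring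
  by_contra hcon
  simp only [Set.mem_iUnion, mem_closedBall, not_exists, not_le] at hcon
  have hpos : ∀ i ∈ t, 0 < (inner ℝ y (y - X i) : ℝ) := by
    intro i _
    have h := hcon i
    rw [dist_eq_norm] at h
    have h2 : (‖X i‖ / 2) ^ 2 < (inner ℝ (y - (1 / 2 : ℝ) • X i) (y - (1 / 2 : ℝ) • X i) : ℝ) := by
      rw [real_inner_self_eq_norm_sq]
      have := norm_nonneg (X i)
      nlinarith [norm_nonneg (y - (1 / 2 : ℝ) • X i)]
    have h3 : (‖X i‖ : ℝ) ^ 2 = inner ℝ (X i) (X i) := (real_inner_self_eq_norm_sq _).symm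
    simp only [inner_sub_left, inner_sub_right, real_inner_smul_left,
      real_inner_smul_right] at h2 ⊢
    nlinarith [real_inner_comm y (X i)]
  obtain ⟨j, hj, hwj⟩ : ∃ j ∈ t, 0 < w j := by
    by_contra hc
    push_neg at hc
    have h0 : ∑ i ∈ t, w i = 0 := Finset.sum_eq_zero fun i hi =>
      le_antisymm (hc i hi) (hw0 i hi)
    rw [hw1] at h0; norm_num at h0
  have hlt : (0:ℝ) < ∑ i ∈ t, w i * (inner ℝ y (y - X i) : ℝ) :=
    Finset.sum_pos' (fun i hi => mul_nonneg (hw0 i hi) (hpos i hi).le)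
      ⟨j, hj, mul_pos hwj (hpos j hj)⟩
  linarith
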